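/- The smooth projective genus 2 curve with LMFDB label 20.60.2.j.1, given by the model y² = −x⁶ − 2x⁵ − 5x⁴ + 5x³ + 5x² + 18x + 11, has no rational points. Equivalently, in the weighted model, there exist no rational numbers x, y, z with (x, z) ≠ (0, 0) such that y² = −x⁶ − 2x⁵z − 5x⁴z² + 5x³z³ + 5x²z⁴ + 18xz⁵ + 11z⁶. -/

import Mathlib

set_option maxHeartbeats 1000000

lemma zmod4_kernel : ∀ a b s t : ZMod 4,
    -(a^2 - a*b - b^2) = s^2 → a^4 + 3*a^3*b + 9*a^2*b^2 + 7*a*b^3 + 11*b^4 = t^2 →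
    (a = 0 ∨ a = 2) ∧ (b = 0 ∨ b = 2) := by decide

lemma int_key (X Z Y : ℤ) (h : IsCoprime X Z)
    (hE : Y ^ 2 = -(X^2 - X*Z - Z^2) * (X^4 + 3*X^3*Z + 9*X^2*Z^2 + 7*X*Z^3 + 11*Z^4)) :
    False := by
  set A : ℤ := X^2 - X*Z - Z^2 with hA
  set B : ℤ := X^4 + 3*X^3*Z + 9*X^2*Z^2 + 7*X*Z^3 + 11*Z^4 with hB
  have hXZ : ¬ (X = 0 ∧ Z = 0) := by
    rintro ⟨rfl, rfl⟩
    simpa using h.isUnit_of_dvd' dvd_rfl dvd_rfl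
  have hBpos : 0 < B := by
    rcases eq_or_ne Z 0 with rfl | hZ
    · have hX : X ≠ 0 := fun hx => hXZ ⟨hx, rfl⟩
      have : 0 < X^4 := by positivity
      simpa [hB] using this
    · have h1 : (1 : ℤ) ≤ Z^4 := by
        have h2 : 1 ≤ |Z| := Int.one_le_abs hZ
        have : 1 ≤ Z^2 := by nlinarith [sq_abs Z]
        nlinarith
      nlinarith [sq_nonneg (4*X^2 + 6*X*Z + 4*Z^2), sq_nonneg (Z*(76*X + 32*Z))]
  have hnA : 0 ≤ -A := by nlinarith [sq_nonneg Y]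
  set g : ℤ := (Int.gcd A B : ℤ) with hg
  have hgA : g ∣ A := Int.gcd_dvd_left A B
  have hgB : g ∣ B := Int.gcd_dvd_right A B
  have hgpos : 0 < g := by
    have hB0 : B ≠ 0 := ne_of_gt hBpos
    have hgN : 0 < Int.gcd A B := Int.gcd_pos_iff.mpr (Or.inr hB0 : A ≠ 0 ∨ B ≠ 0)
    rw [hg]
    exact_mod_cast hgN
  have hid1 : (2*Z - X) * B + (X^3 + 2*X^2*Z + 6*X*Z^2 - 3*Z^3) * A = 25 * Z^5 := by
    rw [hA, hB]; ring
  have hid2 : (2*X + Z) * B + (23*X^3 + 16*X^2*Z + 18*X*Z^2 + 11*Z^3) * A = 25 * X^5 := by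
    rw [hA, hB]; ring
  have hd1 : g ∣ 25 * Z^5 := hid1 ▸ dvd_add (Dvd.dvd.mul_left hgB _) (Dvd.dvd.mul_left hgA _)
  have hd2 : g ∣ 25 * X^5 := hid2 ▸ dvd_add (Dvd.dvd.mul_left hgB _) (Dvd.dvd.mul_left hgA _)
  have hg25 : g ∣ 25 := by
    obtain ⟨u, v, huv⟩ := (h.pow : IsCoprime (X^5) (Z^5))
    have h25 : (25 : ℤ) = u * (25 * X^5) + v * (25 * Z^5) := by linear_combination 25 * huv.symm
    rw [h25]
    exact dvd_add (Dvd.dvd.mul_left hd2 _) (Dvd.dvd.mul_left hd1 _)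
  have hg4 : g = 1 ∨ g = 5 ∨ g = 25 := by
    have hle : g ≤ 25 := Int.le_of_dvd (by norm_num) hg25
    interval_cases g <;> omega
  set a : ℤ := -A / g with ha
  set b : ℤ := B / g with hb
  have hgA' : g ∣ -A := (dvd_neg).mpr hgA
  have haeq : -A = g * a := (Int.mul_ediv_cancel' hgA').symm
  have hbeq : B = g * b := (Int.mul_ediv_cancel' hgB).symm
  have hcop : IsCoprime a b := by
    rw [Int.isCoprime_iff_gcd_eq_one]
    have hdiv := Int.gcd_div_gcd_div_gcd (i := A) (j := B) (by rw [hg] at hgpos; exact_mod_cast hgpos)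
    have hnegdiv : -A / g = -(A / g) := Int.neg_ediv_of_dvd hgA
    rw [ha, hb, hnegdiv, hg]
    simpa [Int.gcd_def, Int.natAbs_neg] using hdiv
  have hE' : Y ^ 2 = (g * g) * (a * b) := by rw [hE, haeq, hbeq]; ring
  have hgY : g ∣ Y := by
    rw [← Int.pow_dvd_pow_iff (two_ne_zero)]
    exact ⟨a * b, by linarith [hE']⟩
  obtain ⟨k, hk⟩ := hgY
  have hab : a * b = k ^ 2 := by
    have hg2 : (g * g : ℤ) ≠ 0 := by positivity
    apply mul_left_cancel₀ hg2
    rw [← hE', hk]; ring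
  have hanon : 0 ≤ a := Int.ediv_nonneg hnA hgpos.le
  have hbpos : 0 < b := by
    rcases lt_or_ge 0 b with h' | h'
    · exact h'
    · nlinarith [hbeq]
  obtain ⟨s, hs⟩ := Int.sq_of_isCoprime hcop hab
  obtain ⟨t, ht⟩ := Int.sq_of_isCoprime hcop.symm (by rw [mul_comm]; exact hab)
  have has : a = s ^ 2 := by
    rcases hs with hs | hs
    · exact hs
    · have : s = 0 := by nlinarith
      rw [hs, this]; ring
  have hbt : b = t ^ 2 := by
    rcases ht with ht | ht
    · exact ht
    · nlinarith
  -- now mod 4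
  have hAeq : -A = g * s ^ 2 := by rw [haeq, has]
  have hBeq : B = g * t ^ 2 := by rw [hbeq, hbt]
  have hgz : ((g : ZMod 4)) = 1 := by
    rcases hg4 with h1 | h1 | h1 <;> rw [h1] <;> push_cast <;> decide
  have c1 : -(((X : ZMod 4))^2 - (X : ZMod 4)*(Z : ZMod 4) - (Z : ZMod 4)^2) = (s : ZMod 4)^2 := by
    have := congrArg (fun n : ℤ => (n : ZMod 4)) hAeq
    push_cast [hA] at this
    rw [hgz] at this
    linear_combination this
  have c2 : ((X : ZMod 4))^4 + 3*((X : ZMod 4))^3*(Z : ZMod 4) + 9*((X : ZMod 4))^2*(Z : ZMod 4)^2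
      + 7*(X : ZMod 4)*(Z : ZMod 4)^3 + 11*((Z : ZMod 4))^4 = (t : ZMod 4)^2 := by
    have := congrArg (fun n : ℤ => (n : ZMod 4)) hBeq
    push_cast [hB] at this
    rw [hgz] at this
    linear_combination this
  obtain ⟨hX4, hZ4⟩ := zmod4_kernel _ _ _ _ c1 c2
  have h2X : (2 : ℤ) ∣ X := by
    rcases hX4 with h' | h'
    · have h4 : ((4:ℕ) : ℤ) ∣ X := (ZMod.intCast_zmod_eq_zero_iff_dvd X 4).mp h'
      have h4' : (4 : ℤ) ∣ X := by exact_mod_cast h4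
      exact dvd_trans (by norm_num) h4'
    · have h4 : ((4:ℕ) : ℤ) ∣ (X - 2) := (ZMod.intCast_zmod_eq_zero_iff_dvd (X - 2) 4).mp
        (by push_cast; rw [h']; ring)
      have h4' : (4 : ℤ) ∣ (X - 2) := by exact_mod_cast h4
      have h2' : (2 : ℤ) ∣ (X - 2) := dvd_trans (by norm_num) h4'
      simpa using dvd_add h2' (dvd_refl 2)
  have h2Z : (2 : ℤ) ∣ Z := by
    rcases hZ4 with h' | h'
    · have h4 : ((4:ℕ) : ℤ) ∣ Z := (ZMod.intCast_zmod_eq_zero_iff_dvd Z 4).mp h'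
      have h4' : (4 : ℤ) ∣ Z := by exact_mod_cast h4
      exact dvd_trans (by norm_num) h4'
    · have h4 : ((4:ℕ) : ℤ) ∣ (Z - 2) := (ZMod.intCast_zmod_eq_zero_iff_dvd (Z - 2) 4).mp
        (by push_cast; rw [h']; ring)
      have h4' : (4 : ℤ) ∣ (Z - 2) := by exact_mod_cast h4
      have h2' : (2 : ℤ) ∣ (Z - 2) := dvd_trans (by norm_num) h4'
      simpa using dvd_add h2' (dvd_refl 2)
  obtain ⟨u, v, huv⟩ := h
  have h21 : (2 : ℤ) ∣ (1 : ℤ) := by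
    rw [← huv]
    exact dvd_add (Dvd.dvd.mul_left h2X u) (Dvd.dvd.mul_left h2Z v)
  norm_num at h21

/-- The smooth projective genus 2 curve with LMFDB label 20.60.2.j.1, with model
`y² = −x⁶ − 2x⁵ − 5x⁴ + 5x³ + 5x² + 18x + 11`, has no rational points: there are no
rational `x, y, z` with `(x, z) ≠ (0, 0)` satisfying the homogenized equation. -/
theorem modular_curve_20_60_2_j_1_no_rational_points :
    ¬ ∃ x y z : ℚ, (x, z) ≠ (0, 0) ∧
      y ^ 2 = -x ^ 6 - 2 * x ^ 5 * z - 5 * x ^ 4 * z ^ 2 + 5 * x ^ 3 * z ^ 3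
        + 5 * x ^ 2 * z ^ 4 + 18 * x * z ^ 5 + 11 * z ^ 6 := by
  rintro ⟨x, y, z, hne, heq⟩
  set N1 : ℤ := x.num * z.den with hN1
  set N2 : ℤ := z.num * x.den with hN2
  set D : ℤ := (x.den : ℤ) * z.den with hD
  have hDQ : (D : ℚ) ≠ 0 := by
    rw [hD]; push_cast
    exact mul_ne_zero (by exact_mod_cast x.den_ne_zero) (by exact_mod_cast z.den_ne_zero)
  have hx0 : x = (N1 : ℚ) / (D : ℚ) := by
    rw [hN1, hD]; push_cast
    rw [mul_div_mul_right _ _ (by exact_mod_cast z.den_ne_zero)]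
    exact (Rat.num_div_den x).symm
  have hz0 : z = (N2 : ℚ) / (D : ℚ) := by
    rw [hN2, hD]; push_cast
    rw [mul_comm ((x.den : ℚ)) ((z.den : ℚ)),
      mul_div_mul_right _ _ (by exact_mod_cast x.den_ne_zero)]
    exact (Rat.num_div_den z).symm
  have hN12 : ¬ (N1 = 0 ∧ N2 = 0) := by
    rintro ⟨h1, h2⟩
    apply hne
    have hx' : x = 0 := by
      rw [hx0, h1]; simp
    have hz' : z = 0 := by
      rw [hz0, h2]; simp
    rw [hx', hz']
  set g : ℤ := (Int.gcd N1 N2 : ℤ) with hg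
  have hgpos : 0 < g := by
    have : N1 ≠ 0 ∨ N2 ≠ 0 := by tauto
    have hgN : 0 < Int.gcd N1 N2 := Int.gcd_pos_iff.mpr this
    rw [hg]; exact_mod_cast hgN
  set X : ℤ := N1 / g with hX
  set Z : ℤ := N2 / g with hZ
  have hcop : IsCoprime X Z := by
    rw [Int.isCoprime_iff_gcd_eq_one, hX, hZ, hg]
    exact Int.gcd_div_gcd_div_gcd (by rw [hg] at hgpos; exact_mod_cast hgpos)
  have hN1e : N1 = g * X := (Int.mul_ediv_cancel' (Int.gcd_dvd_left N1 N2)).symm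
  have hN2e : N2 = g * Z := (Int.mul_ediv_cancel' (Int.gcd_dvd_right N1 N2)).symm
  set q : ℚ := (g : ℚ) / (D : ℚ) with hq
  have hq0 : q ≠ 0 := by
    rw [hq]
    apply div_ne_zero _ hDQ
    exact_mod_cast ne_of_gt hgpos
  have hx1 : x = (X : ℚ) * q := by
    rw [hx0, hN1e, hq]; push_cast; ring
  have hz1 : z = (Z : ℚ) * q := by
    rw [hz0, hN2e, hq]; push_cast; ring
  set M : ℤ := -(X^2 - X*Z - Z^2) * (X^4 + 3*X^3*Z + 9*X^2*Z^2 + 7*X*Z^3 + 11*Z^4) with hM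
  have h6 : y ^ 2 = q ^ 6 * (M : ℚ) := by
    rw [hx1, hz1] at heq
    rw [hM]; push_cast
    linear_combination heq
  set w : ℚ := y / q ^ 3 with hw
  have hwsq : w ^ 2 = (M : ℚ) := by
    rw [hw, div_pow, h6, ← pow_mul]
    field_simp
    ring
  have hden : w.den = 1 := by
    have h1 : (w ^ 2).den = 1 := by rw [hwsq]; exact Rat.den_intCast M
    have h2 : (w ^ 2).den = w.den ^ 2 := Rat.den_pow w 2
    nlinarith [w.den_pos, h1, h2.symm.trans h1]
  obtain ⟨Y, hY⟩ : ∃ Y : ℤ, w = (Y : ℚ) := by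
    refine ⟨w.num, ?_⟩
    conv_lhs => rw [← Rat.num_div_den w]
    rw [hden]; simp
  have hint : Y ^ 2 = M := by
    have : ((Y : ℚ)) ^ 2 = (M : ℚ) := by rw [← hY]; exact hwsq
    exact_mod_cast this
  exact int_key X Z Y hcop (by rw [hint, hM])
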